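/- Let L₀ be the 8×8 symmetric matrix with rows: (−1,1,0,−1,1,0,0,0), (1,−2,1,0,0,0,0,0), (0,1,−2,1,0,0,0,0), (−1,0,1,−1,0,0,0,1), (1,0,0,0,−1,1,0,−1), (0,0,0,0,1,−2,1,0), (0,0,0,0,0,1,−2,1), (0,0,0,1,−1,0,1,−1), and let D = diag(0,1,1,0,0,1,1,0). Then the roots of det(L₀ − λD) = 0 are exactly {0, −2/3, −2, −4}, so zero is a root and all other roots are negative reals. -/

import Mathlib

/-- The degenerate mass matrix `D = diag(0,1,1,0,0,1,1,0)`. -/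
def Dmat : Matrix (Fin 8) (Fin 8) ℂ :=
  Matrix.diagonal ![0, 1, 1, 0, 0, 1, 1, 0]

/-- The decoupled-element operator `L₀` (coupling parameter `γ = 0`) of the
overlapping-element embedding of discrete diffusion. -/
def L0mat : Matrix (Fin 8) (Fin 8) ℂ :=
  !![-1,  1,  0, -1,  1,  0,  0,  0;
      1, -2,  1,  0,  0,  0,  0,  0;
      0,  1, -2,  1,  0,  0,  0,  0;
     -1,  0,  1, -1,  0,  0,  0,  1;
      1,  0,  0,  0, -1,  1,  0, -1;
      0,  0,  0,  0,  1, -2,  1,  0;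
      0,  0,  0,  0,  0,  1, -2,  1;
      0,  0,  0,  1, -1,  0,  1, -1]

/-- The diagonal 4×4 block of `L₀ − λD`. -/
noncomputable def Ablk (l : ℂ) : Matrix (Fin 4) (Fin 4) ℂ :=
  !![-1, 1, 0, -1; 1, -2-l, 1, 0; 0, 1, -2-l, 1; -1, 0, 1, -1]

/-- The off-diagonal 4×4 block of `L₀ − λD`. -/
def Bblk : Matrix (Fin 4) (Fin 4) ℂ :=
  !![1, 0, 0, 0; 0, 0, 0, 0; 0, 0, 0, 0; 0, 0, 0, 1]

lemma det_fromBlocks_symm {n : ℕ} (A B : Matrix (Fin n) (Fin n) ℂ) :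
    (Matrix.fromBlocks A B B A).det = (A + B).det * (A - B).det := by
  have h : Matrix.fromBlocks A B B A =
      Matrix.fromBlocks 1 0 1 1 * Matrix.fromBlocks (A + B) B 0 (A - B) *
        Matrix.fromBlocks 1 0 (-1) 1 := by
    simp only [Matrix.fromBlocks_multiply, Matrix.one_mul, Matrix.mul_one, Matrix.zero_mul,
      Matrix.mul_zero, Matrix.mul_neg, Matrix.neg_mul, Matrix.mul_one, add_zero, zero_add]
    rw [Matrix.fromBlocks_inj]
    refine ⟨?_, rfl, ?_, ?_⟩ <;> module
  rw [h, Matrix.det_mul, Matrix.det_mul, Matrix.det_fromBlocks_zero₂₁,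
    Matrix.det_fromBlocks_zero₁₂, Matrix.det_fromBlocks_zero₁₂]
  simp

lemma blk_eq (lam : ℂ) :
    L0mat - lam • Dmat =
      (Matrix.fromBlocks (Ablk lam) Bblk Bblk (Ablk lam)).submatrix
        finSumFinEquiv.symm finSumFinEquiv.symm := by
  ext i j
  fin_cases i <;> fin_cases j <;>
    first
      | exact show (-1 : ℂ) - lam * 0 = -1 by ring
      | exact show (0 : ℂ) - lam * 0 = 0 by ring
      | exact show (1 : ℂ) - lam * 0 = 1 by ring
      | exact show (-2 : ℂ) - lam * 1 = -2 - lam by ring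

lemma detApB (lam : ℂ) : (Ablk lam + Bblk).det = -lam * (lam + 4) := by
  simp [Ablk, Bblk, Matrix.det_succ_row_zero, Fin.sum_univ_succ,
    show ((1:Fin 4).succAbove 2) = 3 from rfl,
    show (Fin.castSucc (2:Fin 3)) = 2 from rfl,
    show (Fin.castSucc (1:Fin 3)) = 1 from rfl,
    show ((0:Fin 4).succAbove 2) = 3 from rfl,
    show ((0:Fin 3).succAbove 1) = 2 from rfl,
    show ((1:Fin 3).succAbove 1) = 2 from rfl,
    show ((3:Fin 4).succAbove 2) = 2 from rfl]
  ring

lemma detAmB (lam : ℂ) : (Ablk lam - Bblk).det = (3 * lam + 2) * (lam + 2) := by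
  simp [Ablk, Bblk, Matrix.det_succ_row_zero, Fin.sum_univ_succ,
    show ((1:Fin 4).succAbove 2) = 3 from rfl,
    show (Fin.castSucc (2:Fin 3)) = 2 from rfl,
    show (Fin.castSucc (1:Fin 3)) = 1 from rfl,
    show ((0:Fin 4).succAbove 2) = 3 from rfl,
    show ((0:Fin 3).succAbove 1) = 2 from rfl,
    show ((1:Fin 3).succAbove 1) = 2 from rfl,
    show ((3:Fin 4).succAbove 2) = 2 from rfl]
  ring

lemma det_eq (lam : ℂ) :
    (L0mat - lam • Dmat).det = -lam * (lam + 4) * ((3 * lam + 2) * (lam + 2)) := by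
  rw [blk_eq]
  rw [show (Matrix.fromBlocks (Ablk lam) Bblk Bblk (Ablk lam)).submatrix
      finSumFinEquiv.symm finSumFinEquiv.symm =
      Matrix.reindex finSumFinEquiv finSumFinEquiv
        (Matrix.fromBlocks (Ablk lam) Bblk Bblk (Ablk lam)) from rfl]
  rw [Matrix.det_reindex_self, det_fromBlocks_symm, detApB, detAmB]

/-- The roots of `det(L₀ − λD) = 0` are exactly `{0, −2/3, −2, −4}`: zero
is a root and all other roots are negative reals. -/
theorem stmt8 (lam : ℂ) :
    (L0mat - lam • Dmat).det = 0 ↔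
      lam = 0 ∨ lam = -2/3 ∨ lam = -2 ∨ lam = -4 := by
  rw [det_eq]
  constructor
  · intro h
    rcases mul_eq_zero.1 h with h1 | h2
    · rcases mul_eq_zero.1 h1 with h3 | h4
      · left; simpa [neg_eq_zero] using h3
      · right; right; right; linear_combination h4
    · rcases mul_eq_zero.1 h2 with h5 | h6
      · right; left; linear_combination h5 / 3
      · right; right; left; linear_combination h6
  · rintro (rfl | rfl | rfl | rfl) <;> ring
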